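/- For every real p ≥ 0, every integer ℓ ≥ 1 and every vertex v ∈ V_n, the expected total p-connectivity weight of the ℓ-neighbourhood satisfies E[‖S_ℓ(v)‖_p] ≤ W_v^p + W_v·Γ_{p+1,n}·(Γ_{2,n}+1)^{ℓ−1}. In particular, for p = 0 one has E[|S_ℓ(v)|] ≤ 1 + W_v·Γ_{1,n}·(Γ_{2,n}+1)^{ℓ−1}, and for p = 1 one moreover has E[‖S_ℓ(v)‖] ≤ W_v·(Γ_{2,n}+1)^ℓ for every ℓ ∈ ℕ. -/

import Mathlib

open MeasureTheory ProbabilityTheory Real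
open scoped ENNReal

noncomputable section
open Classical

/-- The set of vertices at graph distance at most `ℓ` from `v`, for the graph with
adjacency relation `A` on `Fin n`. -/
def nbhd {n : ℕ} (A : Fin n → Fin n → Prop) : ℕ → Fin n → Set (Fin n)
  | 0, v => {v}
  | ℓ + 1, v => nbhd A ℓ v ∪ {u | ∃ w ∈ nbhd A ℓ v, A w u}

/-- `f` is a path of length `ℓ` for the adjacency relation `A`: `ℓ+1` pairwise distinct
vertices, consecutive ones joined by an edge. -/
def IsPathOn {n : ℕ} (A : Fin n → Fin n → Prop) (ℓ : ℕ) (f : Fin (ℓ + 1) → Fin n) : Prop :=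
  Function.Injective f ∧ ∀ i : Fin ℓ, A (f i.castSucc) (f i.succ)

/-- total `p`-connectivity weight `‖U‖_p` of a vertex set `U`. -/
def wnorm {n : ℕ} (W : Fin n → ℝ) (p : ℝ) (U : Set (Fin n)) : ℝ :=
  ∑ u : Fin n, Set.indicator U (fun u => W u ^ p) u

/-- `Γ_{p,n}` -/
def Gam (n : ℕ) (θ : ℝ) (W : Fin n → ℝ) (p : ℝ) : ℝ :=
  (∑ u : Fin n, W u ^ p) / (n * θ)

/-! ### Auxiliary graph lemmas -/

section graph
variable {n : ℕ} {A : Fin n → Fin n → Prop}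

lemma nbhd_subset_succ (ℓ : ℕ) (v : Fin n) : nbhd A ℓ v ⊆ nbhd A (ℓ+1) v :=
  Set.subset_union_left

lemma nbhd_mono {ℓ m : ℕ} (h : ℓ ≤ m) (v : Fin n) : nbhd A ℓ v ⊆ nbhd A m v := by
  induction m with
  | zero => simp [Nat.le_zero.mp h]
  | succ m ih =>
    rcases Nat.le_succ_iff.mp h with h' | h'
    · exact (ih h').trans (nbhd_subset_succ m v)
    · simp [h']

lemma mem_nbhd_of_path {k : ℕ} {f : Fin (k+1) → Fin n}
    (hf : ∀ i : Fin k, A (f i.castSucc) (f i.succ)) (j : Fin (k+1)) :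
    f j ∈ nbhd A (j : ℕ) (f 0) := by
  induction j using Fin.induction with
  | zero => exact rfl
  | succ i ih =>
    have hval : (↑(i.succ) : ℕ) = (i : ℕ) + 1 := rfl
    rw [hval]
    have ih' : f i.castSucc ∈ nbhd A (i : ℕ) (f 0) := by simpa using ih
    exact Set.mem_union_right _ ⟨f i.castSucc, ih', hf i⟩

lemma exists_path {ℓ : ℕ} {v u : Fin n} (hu : u ∈ nbhd A ℓ v) :
    ∃ k, k ≤ ℓ ∧ ∃ f : Fin (k+1) → Fin n, Function.Injective f ∧
      (∀ i : Fin k, A (f i.castSucc) (f i.succ)) ∧ f 0 = v ∧ f (Fin.last k) = u := by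
  induction ℓ generalizing u with
  | zero =>
    refine ⟨0, le_rfl, fun _ => v, fun a b _ => Fin.ext (by omega), fun i => i.elim0, rfl, ?_⟩
    exact hu.symm
  | succ ℓ ih =>
    rcases hu with hu | ⟨w, hw, hA⟩
    · obtain ⟨k, hk, f, h1, h2, h3, h4⟩ := ih hu
      exact ⟨k, hk.trans (Nat.le_succ _), f, h1, h2, h3, h4⟩
    · obtain ⟨k, hk, f, h1, h2, h3, h4⟩ := ih hw
      by_cases hr : ∃ j, f j = u
      · obtain ⟨j, hj⟩ := hr
        have hmem : u ∈ nbhd A ℓ v := by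
          have := mem_nbhd_of_path h2 j
          rw [hj, h3] at this
          exact nbhd_mono (Nat.le_trans (Nat.le_of_lt_succ j.isLt) hk) v this
        obtain ⟨k', hk', rest⟩ := ih hmem
        exact ⟨k', hk'.trans (Nat.le_succ _), rest⟩
      · push_neg at hr
        refine ⟨k+1, Nat.succ_le_succ hk, Fin.snoc f u, ?_, ?_, ?_, ?_⟩
        · intro a b hab
          induction a using Fin.lastCases with
          | last =>
            induction b using Fin.lastCases with
            | last => rfl
            | cast b =>
              rw [Fin.snoc_last, Fin.snoc_castSucc] at hab
              exact absurd hab.symm (hr b)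
          | cast a =>
            induction b using Fin.lastCases with
            | last =>
              rw [Fin.snoc_last, Fin.snoc_castSucc] at hab
              exact absurd hab (hr a)
            | cast b =>
              rw [Fin.snoc_castSucc, Fin.snoc_castSucc] at hab
              rw [h1 hab]
        · intro i
          induction i using Fin.lastCases with
          | last =>
            rw [Fin.succ_last, Fin.snoc_last, Fin.snoc_castSucc, h4]
            exact hA
          | cast i =>
            rw [Fin.succ_castSucc, Fin.snoc_castSucc, Fin.snoc_castSucc]
            exact h2 i
        · rw [← Fin.castSucc_zero, Fin.snoc_castSucc]
          exact h3
        · exact Fin.snoc_last _ _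

end graph

/-! ### Measurability -/

lemma meas_nbhd {n : ℕ} {Ω : Type} [MeasurableSpace Ω] (X : Fin n → Fin n → Ω → Bool)
    (hmeas : ∀ u v, Measurable (X u v)) (ℓ : ℕ) (v : Fin n) : ∀ u : Fin n,
    MeasurableSet {ω | u ∈ nbhd (fun a b => X a b ω = true) ℓ v} := by
  induction ℓ with
  | zero =>
    intro u
    by_cases h : u = v
    · simp [nbhd, h]
    · simp [nbhd, h]
  | succ ℓ ih =>
    intro u
    have hEq : {ω | u ∈ nbhd (fun a b => X a b ω = true) (ℓ+1) v}
        = {ω | u ∈ nbhd (fun a b => X a b ω = true) ℓ v}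
          ∪ ⋃ w : Fin n, ({ω | w ∈ nbhd (fun a b => X a b ω = true) ℓ v}
              ∩ (X w u ⁻¹' {true})) := by
      ext ω
      simp [nbhd, Set.mem_union, Set.mem_iUnion]
    rw [hEq]
    exact (ih u).union (MeasurableSet.iUnion fun w =>
      (ih w).inter ((hmeas w u) (measurableSet_singleton true)))

/-! ### Probability of a path being present -/

section prob
variable {n : ℕ} {Ω : Type} [MeasurableSpace Ω] {P : Measure Ω} [IsProbabilityMeasure P]

lemma path_event_prob
    (θ : ℝ) (hθ : 0 < θ) (hn : 1 ≤ n) (W : Fin n → ℝ) (hW : ∀ v, 0 < W v)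
    (X : Fin n → Fin n → Ω → Bool)
    (hsymm : ∀ u v, X u v = X v u)
    (hdist : ∀ u v, u ≠ v →
      P {ω | X u v ω = true} = ENNReal.ofReal (min (W u * W v / (n * θ)) 1))
    (hindep : iIndepFun
      (fun e : {p : Fin n × Fin n // p.1 < p.2} => X e.1.1 e.1.2) P)
    {k : ℕ} {f : Fin (k+1) → Fin n} (hinj : Function.Injective f) :
    (P {ω | ∀ i : Fin k, X (f i.castSucc) (f i.succ) ω = true}).toReal
      ≤ ∏ i : Fin k, (W (f i.castSucc) * W (f i.succ) / (n * θ)) := by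
  have hnθ : (0:ℝ) < (n:ℝ) * θ := by
    have h1 : (1:ℝ) ≤ (n:ℝ) := by exact_mod_cast hn
    positivity
  have hne : ∀ i : Fin k, f i.castSucc ≠ f i.succ := by
    intro i h
    exact absurd (hinj h) (Fin.castSucc_lt_succ (i := i)).ne
  set e : Fin k → {p : Fin n × Fin n // p.1 < p.2} := fun i =>
    if h : f i.castSucc < f i.succ then ⟨(f i.castSucc, f i.succ), h⟩
    else ⟨(f i.succ, f i.castSucc), (lt_or_gt_of_ne (hne i)).resolve_left h⟩ with he
  set g : {p : Fin n × Fin n // p.1 < p.2} → Set Ω := fun ε => X ε.1.1 ε.1.2 ⁻¹' {true} with hg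
  have key1 : ∀ i : Fin k, g (e i) = {ω | X (f i.castSucc) (f i.succ) ω = true} := by
    intro i
    rw [he]
    by_cases h : f i.castSucc < f i.succ
    · simp only [h, dite_true]
      rfl
    · simp only [h, dite_false, hg]
      rw [hsymm]
      rfl
  have hv : ∀ (a b : Fin (k+1)), f a = f b → (a:ℕ) = (b:ℕ) :=
    fun a b hab => congrArg Fin.val (hinj hab)
  have einj : Function.Injective e := by
    intro i j h
    rw [he] at h
    have h' := Subtype.ext_iff.mp h
    dsimp only at h'
    split_ifs at h' with h1 h2 h2 <;>
      (obtain ⟨ha, hb⟩ := Prod.ext_iff.mp h'; simp only at ha hb) <;>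
      [skip; skip; skip; skip] <;>
    · have va := hv _ _ ha
      have vb := hv _ _ hb
      simp only [Fin.coe_castSucc, Fin.val_succ] at va vb
      exact Fin.ext (by omega)
  have hset : {ω | ∀ i : Fin k, X (f i.castSucc) (f i.succ) ω = true}
      = ⋂ ε ∈ Finset.image e Finset.univ, g ε := by
    ext ω
    simp only [Set.mem_setOf_eq, Set.mem_iInter, Finset.mem_image, Finset.mem_univ, true_and]
    constructor
    · rintro h ε ⟨i, rfl⟩
      rw [key1 i]
      exact h i
    · intro h i
      have := h (e i) ⟨i, rfl⟩
      rwa [key1 i] at this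
  have hPP : P {ω | ∀ i : Fin k, X (f i.castSucc) (f i.succ) ω = true}
      = ∏ i : Fin k, ENNReal.ofReal (min (W (f i.castSucc) * W (f i.succ) / (n * θ)) 1) := by
    rw [hset, hindep.meas_biInter (fun ε _ =>
      MeasurableSpace.measurableSet_comap.mpr ⟨{true}, trivial, rfl⟩)]
    rw [Finset.prod_image (fun i _ j _ h => einj h)]
    refine Finset.prod_congr rfl fun i _ => ?_
    show P (g (e i)) = _
    rw [key1 i]
    exact hdist _ _ (hne i)
  rw [hPP, ENNReal.toReal_prod]
  have hmnn : ∀ i : Fin k, (0:ℝ) ≤ min (W (f i.castSucc) * W (f i.succ) / (n * θ)) 1 := by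
    intro i
    exact le_min (div_nonneg (mul_nonneg (hW _).le (hW _).le) hnθ.le) zero_le_one
  calc ∏ i : Fin k, (ENNReal.ofReal (min (W (f i.castSucc) * W (f i.succ) / (n * θ)) 1)).toReal
      = ∏ i : Fin k, min (W (f i.castSucc) * W (f i.succ) / (n * θ)) 1 :=
        Finset.prod_congr rfl fun i _ => ENNReal.toReal_ofReal (hmnn i)
    _ ≤ ∏ i : Fin k, (W (f i.castSucc) * W (f i.succ) / (n * θ)) :=
        Finset.prod_le_prod (fun i _ => hmnn i) (fun i _ => min_le_left _ _)

/-- union bound over candidate paths -/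
lemma union_bound (X : Fin n → Fin n → Ω → Bool) (ℓ : ℕ) (v u : Fin n) :
    (P {ω | u ∈ nbhd (fun a b => X a b ω = true) ℓ v}).toReal
      ≤ ∑ k ∈ Finset.range (ℓ+1), ∑ f ∈ Finset.univ.filter (fun f : Fin (k+1) → Fin n =>
            (Function.Injective f ∧ f 0 = v) ∧ f (Fin.last k) = u),
          (P {ω | ∀ i : Fin k, X (f i.castSucc) (f i.succ) ω = true}).toReal := by
  have hincl : {ω | u ∈ nbhd (fun a b => X a b ω = true) ℓ v}
      ⊆ ⋃ k ∈ Finset.range (ℓ+1), ⋃ f ∈ Finset.univ.filter (fun f : Fin (k+1) → Fin n =>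
            (Function.Injective f ∧ f 0 = v) ∧ f (Fin.last k) = u),
          {ω | ∀ i : Fin k, X (f i.castSucc) (f i.succ) ω = true} := by
    intro ω hω
    obtain ⟨k, hk, f, h1, h2, h3, h4⟩ := exists_path hω
    exact Set.mem_biUnion (Finset.mem_range.mpr (Nat.lt_succ_of_le hk))
      (Set.mem_biUnion (Finset.mem_filter.mpr ⟨Finset.mem_univ _, ⟨h1, h3⟩, h4⟩) h2)
  have hle : P {ω | u ∈ nbhd (fun a b => X a b ω = true) ℓ v}
      ≤ ∑ k ∈ Finset.range (ℓ+1), ∑ f ∈ Finset.univ.filter (fun f : Fin (k+1) → Fin n =>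
            (Function.Injective f ∧ f 0 = v) ∧ f (Fin.last k) = u),
          P {ω | ∀ i : Fin k, X (f i.castSucc) (f i.succ) ω = true} :=
    (measure_mono hincl).trans ((measure_biUnion_finset_le _ _).trans
      (Finset.sum_le_sum fun k _ => measure_biUnion_finset_le _ _))
  have hne : (∑ k ∈ Finset.range (ℓ+1), ∑ f ∈ Finset.univ.filter (fun f : Fin (k+1) → Fin n =>
            (Function.Injective f ∧ f 0 = v) ∧ f (Fin.last k) = u),
          P {ω | ∀ i : Fin k, X (f i.castSucc) (f i.succ) ω = true}) ≠ ⊤ := by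
    refine (ENNReal.sum_lt_top.mpr fun k _ => ?_).ne
    exact ENNReal.sum_lt_top.mpr fun f _ => measure_lt_top P _
  refine (ENNReal.toReal_mono hne hle).trans_eq ?_
  rw [ENNReal.toReal_sum (fun k hk => ?_)]
  · refine Finset.sum_congr rfl fun k _ => ?_
    rw [ENNReal.toReal_sum (fun f _ => measure_ne_top P _)]
  · exact (ENNReal.sum_lt_top.mpr fun f _ => measure_lt_top P _).ne

end prob

/-! ### Walk sums -/

def wcons {n k : ℕ} (a : Fin n) (g : Fin k → Fin n) : Fin (k+1) → Fin n := Fin.cons a g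

@[simp] lemma wcons_zero {n k : ℕ} (a : Fin n) (g : Fin k → Fin n) : wcons a g 0 = a := rfl
@[simp] lemma wcons_succ {n k : ℕ} (a : Fin n) (g : Fin k → Fin n) (i : Fin k) :
    wcons a g i.succ = g i := by simp [wcons]
lemma wcons_self_tail {n k : ℕ} (f : Fin (k+1) → Fin n) : wcons (f 0) (Fin.tail f) = f :=
  Fin.cons_self_tail f
@[simp] lemma tail_wcons {n k : ℕ} (a : Fin n) (g : Fin k → Fin n) :
    Fin.tail (wcons a g) = g := by simp [wcons]

/-- sum over all walks of length `k` starting at `a`. -/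
def Twalk (n : ℕ) (q : Fin n → Fin n → ℝ) (r : Fin n → ℝ) (k : ℕ) (a : Fin n) : ℝ :=
  ∑ g : Fin k → Fin n,
    (∏ i : Fin k, q (wcons a g i.castSucc) (wcons a g i.succ)) * r (wcons a g (Fin.last k))

section walk
variable {n : ℕ}

lemma Twalk_zero (q : Fin n → Fin n → ℝ) (r : Fin n → ℝ) (a : Fin n) :
    Twalk n q r 0 a = r a := by
  rw [Twalk]
  rw [Finset.sum_unique_nonempty (h := Finset.univ_nonempty)]
  simp [Fin.last, wcons]

lemma cons_split (q : Fin n → Fin n → ℝ) (r : Fin n → ℝ) {k : ℕ} (a : Fin n)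
    (h : Fin (k+1) → Fin n) :
    (∏ i : Fin (k+1), q (wcons a h i.castSucc) (wcons a h i.succ)) *
        r (wcons a h (Fin.last (k+1)))
      = q a (h 0) *
        ((∏ i : Fin k, q (h i.castSucc) (h i.succ)) * r (h (Fin.last k))) := by
  rw [Fin.prod_univ_succ]
  simp only [Fin.castSucc_zero, wcons_zero, wcons_succ, ← Fin.succ_castSucc, ← Fin.succ_last]
  ring

lemma Twalk_succ (q : Fin n → Fin n → ℝ) (r : Fin n → ℝ) (k : ℕ) (a : Fin n) :
    Twalk n q r (k+1) a = ∑ b : Fin n, q a b * Twalk n q r k b := by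
  have hEq := Equiv.sum_comp (Fin.consEquiv (fun _ : Fin (k+1) => Fin n))
      (fun h => (∏ i : Fin (k+1), q (wcons a h i.castSucc) (wcons a h i.succ)) *
        r (wcons a h (Fin.last (k+1))))
  rw [Twalk, ← hEq, Fintype.sum_prod_type]
  refine Finset.sum_congr rfl fun b _ => ?_
  rw [Twalk, Finset.mul_sum]
  refine Finset.sum_congr rfl fun g _ => ?_
  have hc : (Fin.consEquiv (fun _ : Fin (k+1) => Fin n)) (b, g) = wcons b g := rfl
  rw [hc, cons_split q r a (wcons b g), wcons_zero]

lemma Twalk_le (θ : ℝ) (hn : 1 ≤ n) (hθ : 0 < θ) (W : Fin n → ℝ) (hW : ∀ v, 0 < W v)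
    (p : ℝ) :
    ∀ k (a : Fin n), Twalk n (fun a b => W a * W b / (n * θ)) (fun b => W b ^ p) (k+1) a
      ≤ W a * Gam n θ W (p+1) * (Gam n θ W 2) ^ k := by
  have hnθ : (0:ℝ) < (n:ℝ) * θ := by
    have h1 : (1:ℝ) ≤ (n:ℝ) := by exact_mod_cast hn
    positivity
  have hq : ∀ a b : Fin n, (0:ℝ) ≤ W a * W b / (n * θ) :=
    fun a b => div_nonneg (mul_nonneg (hW a).le (hW b).le) hnθ.le
  have h2 : ∀ b : Fin n, W b ^ (2:ℝ) = W b * W b := by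
    intro b
    rw [show (2:ℝ) = ((2:ℕ):ℝ) by norm_num, Real.rpow_natCast]
    ring
  intro k
  induction k with
  | zero =>
    intro a
    have key : ∀ b : Fin n, W a * W b / (↑n * θ) * W b ^ p = W a * (W b ^ (p+1) / (↑n * θ)) := by
      intro b
      rw [Real.rpow_add_one (hW b).ne']
      ring
    rw [Twalk_succ]
    simp only [Twalk_zero]
    rw [Finset.sum_congr rfl fun b _ => key b, ← Finset.mul_sum, ← Finset.sum_div]
    rw [pow_zero, mul_one, Gam]
  | succ k ih =>
    intro a
    rw [Twalk_succ]
    calc ∑ b : Fin n, W a * W b / (↑n * θ) *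
            Twalk n (fun a b => W a * W b / (↑n * θ)) (fun b => W b ^ p) (k+1) b
        ≤ ∑ b : Fin n, W a * W b / (↑n * θ) *
            (W b * Gam n θ W (p+1) * (Gam n θ W 2) ^ k) :=
          Finset.sum_le_sum fun b _ => mul_le_mul_of_nonneg_left (ih b) (hq a b)
      _ = W a * Gam n θ W (p+1) * (Gam n θ W 2) ^ (k+1) := by
          have key : ∀ b : Fin n,
              W a * W b / (↑n * θ) * (W b * Gam n θ W (p+1) * (Gam n θ W 2) ^ k)
              = (W a * Gam n θ W (p+1) * (Gam n θ W 2) ^ k) * (W b ^ (2:ℝ) / (↑n * θ)) := by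
            intro b
            rw [h2 b]
            ring
          rw [Finset.sum_congr rfl fun b _ => key b, ← Finset.mul_sum, ← Finset.sum_div]
          rw [show ((∑ b : Fin n, W b ^ (2:ℝ)) / (↑n * θ)) = Gam n θ W 2 from rfl]
          ring

lemma sum_paths_le (θ : ℝ) (hn : 1 ≤ n) (hθ : 0 < θ) (W : Fin n → ℝ) (hW : ∀ v, 0 < W v)
    (p : ℝ) (k : ℕ) (v : Fin n) :
    ∑ u : Fin n, W u ^ p *
      ∑ f ∈ Finset.univ.filter (fun f : Fin (k+1) → Fin n =>
          (Function.Injective f ∧ f 0 = v) ∧ f (Fin.last k) = u),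
        ∏ i : Fin k, (W (f i.castSucc) * W (f i.succ) / (n * θ))
      ≤ Twalk n (fun a b => W a * W b / (n * θ)) (fun b => W b ^ p) k v := by
  have hnθ : (0:ℝ) < (n:ℝ) * θ := by
    have h1 : (1:ℝ) ≤ (n:ℝ) := by exact_mod_cast hn
    positivity
  have hq : ∀ a b : Fin n, (0:ℝ) ≤ W a * W b / (n * θ) :=
    fun a b => div_nonneg (mul_nonneg (hW a).le (hW b).le) hnθ.le
  have hF : ∀ f : Fin (k+1) → Fin n,
      (0:ℝ) ≤ (∏ i : Fin k, (W (f i.castSucc) * W (f i.succ) / (n * θ)))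
        * W (f (Fin.last k)) ^ p :=
    fun f => mul_nonneg (Finset.prod_nonneg fun i _ => hq _ _) (Real.rpow_nonneg (hW _).le _)
  have step1 : ∀ u : Fin n, W u ^ p *
      ∑ f ∈ Finset.univ.filter (fun f : Fin (k+1) → Fin n =>
          (Function.Injective f ∧ f 0 = v) ∧ f (Fin.last k) = u),
        ∏ i : Fin k, (W (f i.castSucc) * W (f i.succ) / (n * θ))
      = ∑ f ∈ Finset.univ.filter (fun f : Fin (k+1) → Fin n =>
          (Function.Injective f ∧ f 0 = v) ∧ f (Fin.last k) = u),
        (∏ i : Fin k, (W (f i.castSucc) * W (f i.succ) / (n * θ))) * W (f (Fin.last k)) ^ p := by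
    intro u
    rw [Finset.mul_sum]
    refine Finset.sum_congr rfl fun f hf => ?_
    rw [(Finset.mem_filter.mp hf).2.2]
    ring
  rw [Finset.sum_congr rfl fun u _ => step1 u]
  have step2 : (∑ u : Fin n, ∑ f ∈ Finset.univ.filter (fun f : Fin (k+1) → Fin n =>
          (Function.Injective f ∧ f 0 = v) ∧ f (Fin.last k) = u),
        (∏ i : Fin k, (W (f i.castSucc) * W (f i.succ) / (n * θ))) * W (f (Fin.last k)) ^ p)
      = ∑ f ∈ Finset.univ.filter (fun f : Fin (k+1) → Fin n =>
          Function.Injective f ∧ f 0 = v),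
        (∏ i : Fin k, (W (f i.castSucc) * W (f i.succ) / (n * θ))) * W (f (Fin.last k)) ^ p := by
    rw [← Finset.sum_fiberwise (Finset.univ.filter (fun f : Fin (k+1) → Fin n =>
        Function.Injective f ∧ f 0 = v)) (fun f => f (Fin.last k))]
    refine Finset.sum_congr rfl fun u _ => ?_
    rw [Finset.filter_filter]
  rw [step2]
  have step3 : (∑ f ∈ Finset.univ.filter (fun f : Fin (k+1) → Fin n =>
          Function.Injective f ∧ f 0 = v),
        (∏ i : Fin k, (W (f i.castSucc) * W (f i.succ) / (n * θ))) * W (f (Fin.last k)) ^ p)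
      ≤ ∑ f ∈ Finset.univ.filter (fun f : Fin (k+1) → Fin n => f 0 = v),
        (∏ i : Fin k, (W (f i.castSucc) * W (f i.succ) / (n * θ))) * W (f (Fin.last k)) ^ p :=
    Finset.sum_le_sum_of_subset_of_nonneg
      (fun f hf => by simp only [Finset.mem_filter] at hf ⊢; exact ⟨hf.1, hf.2.2⟩) (fun f _ _ => hF f)
  refine step3.trans_eq ?_
  rw [Twalk]
  refine Finset.sum_nbij' (fun f => Fin.tail f) (fun g => wcons v g) ?_ ?_ ?_ ?_ ?_
  · intro f _; exact Finset.mem_univ _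
  · intro g _
    simp
  · intro f hf
    have h0 : f 0 = v := (Finset.mem_filter.mp hf).2
    rw [← h0]
    exact wcons_self_tail f
  · intro g _
    exact tail_wcons v g
  · intro f hf
    have h0 : f 0 = v := (Finset.mem_filter.mp hf).2
    rw [show wcons v (Fin.tail f) = f by rw [← h0]; exact wcons_self_tail f]

end walk

/-! ### Misc auxiliary lemmas -/

lemma my_geom_le {x : ℝ} (hx : 0 ≤ x) :
    ∀ m : ℕ, ∑ j ∈ Finset.range (m+1), x ^ j ≤ (x+1) ^ m := by
  intro m
  induction m with
  | zero => simp
  | succ m ih =>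
    rw [Finset.sum_range_succ]
    have h1 : x ^ (m+1) ≤ x * (x+1) ^ m := by
      rw [pow_succ']
      exact mul_le_mul_of_nonneg_left (pow_le_pow_left₀ hx (by linarith) m) hx
    have h2 : (x+1) ^ (m+1) = (x+1) ^ m + x * (x+1) ^ m := by ring
    linarith

lemma integral_wnorm {n : ℕ} {Ω : Type} [MeasurableSpace Ω] (P : Measure Ω)
    [IsProbabilityMeasure P] (W : Fin n → ℝ) (X : Fin n → Fin n → Ω → Bool)
    (hmeas : ∀ u v, Measurable (X u v)) (p : ℝ) (ℓ : ℕ) (v : Fin n) :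
    ∫ ω, wnorm W p (nbhd (fun a b => X a b ω = true) ℓ v) ∂P
      = ∑ u : Fin n, W u ^ p *
          (P {ω | u ∈ nbhd (fun a b => X a b ω = true) ℓ v}).toReal := by
  have hrw : ∀ u : Fin n, (fun ω =>
      Set.indicator (nbhd (fun a b => X a b ω = true) ℓ v) (fun u => W u ^ p) u)
      = ({ω | u ∈ nbhd (fun a b => X a b ω = true) ℓ v}).indicator (fun _ => W u ^ p) := by
    intro u
    funext ω
    by_cases h : u ∈ nbhd (fun a b => X a b ω = true) ℓ v
    · rw [Set.indicator_of_mem h,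
        Set.indicator_of_mem (show ω ∈ {ω' | u ∈ nbhd (fun a b => X a b ω' = true) ℓ v} from h)]
    · rw [Set.indicator_of_notMem h,
        Set.indicator_of_notMem
          (show ω ∉ {ω' | u ∈ nbhd (fun a b => X a b ω' = true) ℓ v} from h)]
  have hint : ∀ u : Fin n, Integrable
      (({ω | u ∈ nbhd (fun a b => X a b ω = true) ℓ v}).indicator (fun _ => W u ^ p)) P := by
    intro u
    rw [integrable_indicator_iff (meas_nbhd X hmeas ℓ v u)]
    exact integrableOn_const (measure_ne_top P _)
  calc ∫ ω, wnorm W p (nbhd (fun a b => X a b ω = true) ℓ v) ∂P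
      = ∫ ω, ∑ u : Fin n,
          ({ω' | u ∈ nbhd (fun a b => X a b ω' = true) ℓ v}).indicator
            (fun _ => W u ^ p) ω ∂P := by
        refine integral_congr_ae (Filter.Eventually.of_forall fun ω => ?_)
        simp only [wnorm]
        exact Finset.sum_congr rfl fun u _ => congrFun (hrw u) ω
    _ = ∑ u : Fin n, ∫ ω,
          ({ω' | u ∈ nbhd (fun a b => X a b ω' = true) ℓ v}).indicator
            (fun _ => W u ^ p) ω ∂P :=
        integral_finset_sum _ fun u _ => hint u
    _ = ∑ u : Fin n, W u ^ p *
          (P {ω | u ∈ nbhd (fun a b => X a b ω = true) ℓ v}).toReal := by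
        refine Finset.sum_congr rfl fun u _ => ?_
        rw [integral_indicator_const (W u ^ p) (meas_nbhd X hmeas ℓ v u), smul_eq_mul, mul_comm, measureReal_def]

theorem stmt0
    (n : ℕ) (hn : 1 ≤ n) (θ : ℝ) (hθ : 0 < θ)
    (W : Fin n → ℝ) (hW : ∀ v, 0 < W v)
    {Ω : Type} [MeasurableSpace Ω] (P : Measure Ω) [IsProbabilityMeasure P]
    (X : Fin n → Fin n → Ω → Bool)
    (hmeas : ∀ u v, Measurable (X u v))
    (hsymm : ∀ u v, X u v = X v u)
    (hdiag : ∀ v, X v v = fun _ => false)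
    (hdist : ∀ u v, u ≠ v →
      P {ω | X u v ω = true} = ENNReal.ofReal (min (W u * W v / (n * θ)) 1))
    (hindep : iIndepFun
      (fun e : {p : Fin n × Fin n // p.1 < p.2} => X e.1.1 e.1.2) P) :
    (∀ p : ℝ, 0 ≤ p → ∀ ℓ : ℕ, 1 ≤ ℓ → ∀ v : Fin n,
      ∫ ω, wnorm W p (nbhd (fun a b => X a b ω = true) ℓ v) ∂P
        ≤ W v ^ p + W v * Gam n θ W (p + 1) * (Gam n θ W 2 + 1) ^ (ℓ - 1)) ∧
    (∀ ℓ : ℕ, 1 ≤ ℓ → ∀ v : Fin n,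
      ∫ ω, ((nbhd (fun a b => X a b ω = true) ℓ v).ncard : ℝ) ∂P
        ≤ 1 + W v * Gam n θ W 1 * (Gam n θ W 2 + 1) ^ (ℓ - 1)) ∧
    (∀ ℓ : ℕ, ∀ v : Fin n,
      ∫ ω, wnorm W 1 (nbhd (fun a b => X a b ω = true) ℓ v) ∂P
        ≤ W v * (Gam n θ W 2 + 1) ^ ℓ) := by
  have hnθ : (0:ℝ) < (n:ℝ) * θ := by
    have h1 : (1:ℝ) ≤ (n:ℝ) := by exact_mod_cast hn
    positivity
  have hGam : ∀ r : ℝ, 0 ≤ Gam n θ W r := fun r =>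
    div_nonneg (Finset.sum_nonneg fun u _ => Real.rpow_nonneg (hW u).le r) hnθ.le
  have key : ∀ p : ℝ, 0 ≤ p → ∀ ℓ : ℕ, 1 ≤ ℓ → ∀ v : Fin n,
      ∫ ω, wnorm W p (nbhd (fun a b => X a b ω = true) ℓ v) ∂P
        ≤ W v ^ p + W v * Gam n θ W (p + 1) * (Gam n θ W 2 + 1) ^ (ℓ - 1) := by
    intro p hp ℓ hℓ v
    obtain ⟨m, rfl⟩ : ∃ m, ℓ = m + 1 := ⟨ℓ - 1, by omega⟩
    rw [integral_wnorm P W X hmeas, Nat.add_sub_cancel]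
    calc ∑ u : Fin n, W u ^ p *
            (P {ω | u ∈ nbhd (fun a b => X a b ω = true) (m+1) v}).toReal
        ≤ ∑ u : Fin n, W u ^ p *
            ∑ k ∈ Finset.range (m+2), ∑ f ∈ Finset.univ.filter (fun f : Fin (k+1) → Fin n =>
                (Function.Injective f ∧ f 0 = v) ∧ f (Fin.last k) = u),
              ∏ i : Fin k, (W (f i.castSucc) * W (f i.succ) / (n * θ)) := by
          refine Finset.sum_le_sum fun u _ => mul_le_mul_of_nonneg_left
            ((union_bound X (m+1) v u).trans ?_) (Real.rpow_nonneg (hW u).le p)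
          refine Finset.sum_le_sum fun k _ => Finset.sum_le_sum fun f hf => ?_
          exact path_event_prob θ hθ hn W hW X hsymm hdist hindep
            ((Finset.mem_filter.mp hf).2.1).1
      _ = ∑ k ∈ Finset.range (m+2), ∑ u : Fin n, W u ^ p *
            ∑ f ∈ Finset.univ.filter (fun f : Fin (k+1) → Fin n =>
                (Function.Injective f ∧ f 0 = v) ∧ f (Fin.last k) = u),
              ∏ i : Fin k, (W (f i.castSucc) * W (f i.succ) / (n * θ)) := by
          rw [Finset.sum_congr rfl fun u _ => Finset.mul_sum _ _ _, Finset.sum_comm]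
      _ ≤ ∑ k ∈ Finset.range (m+2),
            Twalk n (fun a b => W a * W b / (n * θ)) (fun b => W b ^ p) k v :=
          Finset.sum_le_sum fun k _ => sum_paths_le θ hn hθ W hW p k v
      _ = (∑ k ∈ Finset.range (m+1),
            Twalk n (fun a b => W a * W b / (n * θ)) (fun b => W b ^ p) (k+1) v)
          + Twalk n (fun a b => W a * W b / (n * θ)) (fun b => W b ^ p) 0 v :=
          Finset.sum_range_succ' _ (m+1)
      _ ≤ (∑ k ∈ Finset.range (m+1), W v * Gam n θ W (p+1) * (Gam n θ W 2) ^ k)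
          + W v ^ p := by
          refine add_le_add (Finset.sum_le_sum fun k _ => Twalk_le θ hn hθ W hW p k v) ?_
          rw [Twalk_zero]
      _ ≤ W v ^ p + W v * Gam n θ W (p+1) * (Gam n θ W 2 + 1) ^ m := by
          rw [add_comm]
          refine add_le_add (le_refl _) ?_
          rw [← Finset.mul_sum]
          exact mul_le_mul_of_nonneg_left (my_geom_le (hGam 2) m)
            (mul_nonneg (hW v).le (hGam (p+1)))
  refine ⟨key, ?_, ?_⟩
  · intro ℓ hℓ v
    have hcard : ∀ U : Set (Fin n), ((U.ncard : ℝ)) = wnorm W 0 U := by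
      intro U
      simp only [wnorm]
      have hpt : ∀ u : Fin n, Set.indicator U (fun u => W u ^ (0:ℝ)) u
          = if u ∈ U then 1 else 0 := by
        intro u
        by_cases h : u ∈ U <;> simp [Set.indicator, h]
      rw [Finset.sum_congr rfl fun u _ => hpt u, Finset.sum_boole]
      congr 1
      rw [Set.ncard_eq_toFinset_card' U]
      congr 1
      ext u
      simp
    have h0 := key 0 le_rfl ℓ hℓ v
    rw [Real.rpow_zero] at h0
    calc ∫ ω, ((nbhd (fun a b => X a b ω = true) ℓ v).ncard : ℝ) ∂P
        = ∫ ω, wnorm W 0 (nbhd (fun a b => X a b ω = true) ℓ v) ∂P :=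
          integral_congr_ae (Filter.Eventually.of_forall fun ω => hcard _)
      _ ≤ 1 + W v * Gam n θ W (0 + 1) * (Gam n θ W 2 + 1) ^ (ℓ - 1) := h0
      _ = 1 + W v * Gam n θ W 1 * (Gam n θ W 2 + 1) ^ (ℓ - 1) := by norm_num
  · intro ℓ v
    cases ℓ with
    | zero =>
      have h1 : ∀ ω : Ω, wnorm W 1 (nbhd (fun a b => X a b ω = true) 0 v) = W v := by
        intro ω
        simp only [wnorm]
        have hpt : ∀ u : Fin n,
            Set.indicator (nbhd (fun a b => X a b ω = true) 0 v) (fun u => W u ^ (1:ℝ)) u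
            = if u = v then W u ^ (1:ℝ) else 0 := by
          intro u
          by_cases h : u = v <;> simp [nbhd, Set.indicator, h]
        rw [Finset.sum_congr rfl fun u _ => hpt u, Finset.sum_ite_eq' Finset.univ v]
        simp [Real.rpow_one]
      calc ∫ ω, wnorm W 1 (nbhd (fun a b => X a b ω = true) 0 v) ∂P
          = ∫ _ω, W v ∂P := integral_congr_ae (Filter.Eventually.of_forall h1)
        _ = W v := by simp
        _ ≤ W v * (Gam n θ W 2 + 1) ^ 0 := by simp
    | succ m =>
      have h := key 1 zero_le_one (m+1) (by omega) v
      rw [Real.rpow_one, show (1:ℝ) + 1 = 2 by norm_num, Nat.add_sub_cancel] at h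
      refine h.trans ?_
      have hx : (1:ℝ) ≤ (Gam n θ W 2 + 1) ^ m := one_le_pow₀ (by linarith [hGam 2])
      have hexp : W v * (Gam n θ W 2 + 1) ^ (m+1)
          = W v * (Gam n θ W 2 + 1) ^ m + W v * Gam n θ W 2 * (Gam n θ W 2 + 1) ^ m := by
        ring
      nlinarith [(hW v).le, hGam 2, hx, hW v]
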